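/- In the integral group ring ℤ[C₈], where C₈ = ⟨x⟩ is the cyclic group of order 8, the unit u = 2 + x − x³ − x⁴ − x⁵ + x⁷ has infinite multiplicative order: u^m ≠ 1 for every positive integer m. -/

import Mathlib

noncomputable def zeta8 : ℂ := (1 + Complex.I) / (Real.sqrt 2 : ℝ)

lemma sqrt2C_sq : ((Real.sqrt 2 : ℝ) : ℂ) ^ 2 = 2 := by
  norm_cast
  rw [Real.sq_sqrt] <;> norm_num

lemma sqrt2C_ne : ((Real.sqrt 2 : ℝ) : ℂ) ≠ 0 := by
  simpa using Real.sqrt_ne_zero'.mpr (by norm_num : (0:ℝ) < 2)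

lemma zeta8_sq : zeta8 ^ 2 = Complex.I := by
  have h2 := sqrt2C_sq
  rw [zeta8, div_pow, h2]
  have : (1 + Complex.I) ^ 2 = 2 * Complex.I := by
    ring_nf
    rw [Complex.I_sq]; ring
  rw [this]
  ring

lemma zeta8_pow8 : zeta8 ^ 8 = 1 := by
  have : zeta8 ^ 8 = (zeta8 ^ 2) ^ 4 := by ring
  rw [this, zeta8_sq]
  simp [pow_succ, Complex.I_mul_I]

lemma zeta8_pow_mod (m : ℕ) : zeta8 ^ (m % 8) = zeta8 ^ m := by
  conv_rhs => rw [← Nat.div_add_mod m 8]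
  rw [pow_add, pow_mul, zeta8_pow8, one_pow, one_mul]

noncomputable def fC8 : Multiplicative (ZMod 8) →* ℂ where
  toFun g := zeta8 ^ (Multiplicative.toAdd g).val
  map_one' := by simp [ZMod.val_zero]
  map_mul' a b := by
    show zeta8 ^ (Multiplicative.toAdd a + Multiplicative.toAdd b).val = _
    rw [ZMod.val_add, zeta8_pow_mod, pow_add]

noncomputable def phiC8 := MonoidAlgebra.lift ℤ ℂ (Multiplicative (ZMod 8)) fC8

/-- In the integral group ring `ℤ[C₈]`, where `C₈ = ⟨x⟩` is
the cyclic group of order 8, the unit `u = 2 + x − x³ − x⁴ − x⁵ + x⁷` has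
infinite multiplicative order: `u^m ≠ 1` for every positive integer `m`. -/
theorem unit_Z_C8_infinite_order
    (x : MonoidAlgebra ℤ (Multiplicative (ZMod 8)))
    (hx : x = MonoidAlgebra.of ℤ (Multiplicative (ZMod 8))
      (Multiplicative.ofAdd (1 : ZMod 8)))
    (u : MonoidAlgebra ℤ (Multiplicative (ZMod 8)))
    (hu : u = 2 + x - x ^ 3 - x ^ 4 - x ^ 5 + x ^ 7) :
    ∀ m : ℕ, 0 < m → u ^ m ≠ 1 := by
  intro m hm h1
  have hφx : phiC8 x = zeta8 := by
    rw [hx, phiC8, MonoidAlgebra.lift_of]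
    show zeta8 ^ (1 : ZMod 8).val = zeta8
    have : (1 : ZMod 8).val = 1 := rfl
    rw [this, pow_one]
  have hval : phiC8 u = ((3 + 2 * Real.sqrt 2 : ℝ) : ℂ) := by
    rw [hu]
    rw [map_add, map_sub, map_sub, map_sub, map_add, map_pow, map_pow, map_pow,
      map_pow, hφx, map_ofNat]
    have h3 : zeta8 ^ 3 = Complex.I * zeta8 := by
      rw [show (3:ℕ) = 2 + 1 from rfl, pow_add, zeta8_sq, pow_one]
    have h4 : zeta8 ^ 4 = -1 := by
      rw [show (4:ℕ) = 2 * 2 from rfl, pow_mul, zeta8_sq, Complex.I_sq]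
    have h5 : zeta8 ^ 5 = -zeta8 := by
      rw [show (5:ℕ) = 4 + 1 from rfl, pow_add, h4, pow_one]; ring
    have h7 : zeta8 ^ 7 = -(Complex.I * zeta8) := by
      rw [show (7:ℕ) = 4 + 3 from rfl, pow_add, h4, h3]; ring
    rw [h3, h4, h5, h7]
    have hz : zeta8 * (1 - Complex.I) = ((Real.sqrt 2 : ℝ) : ℂ) := by
      rw [zeta8, div_mul_eq_mul_div, div_eq_iff sqrt2C_ne]
      linear_combination -sqrt2C_sq - Complex.I_sq
    push_cast
    linear_combination (2 : ℂ) * hz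
  have h2 : phiC8 u ^ m = 1 := by rw [← map_pow, h1, map_one]
  rw [hval] at h2
  have h3 : ((3 + 2 * Real.sqrt 2 : ℝ) ^ m : ℝ) = 1 := by
    exact_mod_cast h2
  have hgt : (1 : ℝ) < 3 + 2 * Real.sqrt 2 := by
    nlinarith [Real.sqrt_nonneg 2]
  nlinarith [one_lt_pow₀ hgt hm.ne']
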